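/- Let μ be a nonzero locally finite Borel measure on ℂ whose support is contained in the ray [x', ∞) ⊂ ℝ, with x' ∈ supp(μ), and such that ∫ 1/(1+|ξ|²) dμ(ξ) < ∞. Then the function t ↦ ∫_ℂ [1/((x'−t)−ξ) − 1/(z₀−ξ)] dμ(ξ) (for a fixed z₀ ∉ supp(μ)) is not constant on (0,∞); indeed its derivative in t at any t > 0 equals ∫ 1/(x'−t−ξ)² dμ(ξ), which is strictly positive. -/

import Mathlib

open MeasureTheory Metric

private lemma aux_bound1 (t x' : ℝ) (ht : 0 < t) : ∃ C : ℝ, 0 < C ∧ ∀ v : ℝ, x' ≤ v →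
    1 + v ^ 2 ≤ C * (t + (v - x')) ^ 2 := by
  have hm : 0 < min t 1 := lt_min ht one_pos
  refine ⟨((|x'| + 1) / min t 1) ^ 2, by positivity, fun v hv => ?_⟩
  have hu : 0 ≤ v - x' := by linarith
  have ha : 0 ≤ |x'| := abs_nonneg x'
  have hxa : x' ≤ |x'| := le_abs_self x'
  have hx2 : x' ^ 2 ≤ |x'| ^ 2 := by rw [sq_abs]
  have key1 : 1 + v ^ 2 ≤ (|x'| + 1) ^ 2 * (1 + (v - x')) ^ 2 := by
    nlinarith [mul_nonneg hu ha, mul_nonneg (mul_nonneg hu hu) ha, sq_nonneg (v - x'),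
      mul_nonneg (mul_nonneg hu ha) ha, mul_nonneg (mul_nonneg (mul_nonneg hu hu) ha) ha]
  have key3 : (min t 1) ^ 2 * (1 + (v - x')) ^ 2 ≤ (t + (v - x')) ^ 2 := by
    have h1 : min t 1 ≤ t := min_le_left _ _
    have h2 : min t 1 ≤ 1 := min_le_right _ _
    have key2 : min t 1 * (1 + (v - x')) ≤ t + (v - x') := by nlinarith
    have h0 : 0 ≤ min t 1 * (1 + (v - x')) := by positivity
    nlinarith
  calc 1 + v ^ 2 ≤ (|x'| + 1) ^ 2 * (1 + (v - x')) ^ 2 := key1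
    _ = ((|x'| + 1) / min t 1) ^ 2 * ((min t 1) ^ 2 * (1 + (v - x')) ^ 2) := by
        field_simp
    _ ≤ ((|x'| + 1) / min t 1) ^ 2 * (t + (v - x')) ^ 2 :=
        mul_le_mul_of_nonneg_left key3 (by positivity)

private lemma aux_bound2 (t x' r N : ℝ) (ht : 0 < t) (hr : 0 < r) :
    ∃ C : ℝ, 0 < C ∧ ∀ v A : ℝ, x' ≤ v → r ≤ A → |v| - N ≤ A →
    1 + v ^ 2 ≤ C * ((t + (v - x')) * A) := by
  obtain ⟨C₁, hC₁, h1⟩ := aux_bound1 t x' ht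
  set K := max (N - x') 0 with hK
  have hK0 : 0 ≤ K := le_max_right _ _
  have hmr : 0 < min r 1 := lt_min hr one_pos
  refine ⟨C₁ * max t 1 * ((K + 2) / min r 1), by positivity, fun v A hv hrA hNA => ?_⟩
  have hu : 0 ≤ v - x' := by linarith
  have hA : 1 + (v - x') ≤ (K + 2) / min r 1 * A := by
    rw [div_mul_eq_mul_div, le_div_iff₀ (by positivity)]
    rcases le_or_gt (v - x') (K + 1) with hc | hc
    · have : min r 1 ≤ r := min_le_left _ _
      nlinarith
    · have hvN : v - N ≤ A := le_trans (by have := le_abs_self v; linarith) hNA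
      have hKx : N - x' ≤ K := le_max_left _ _
      have huK : (v - x') - K ≤ A := by linarith
      have hmr1 : min r 1 ≤ 1 := min_le_right _ _
      have hA0 : 0 < A := lt_of_lt_of_le hr hrA
      nlinarith
  have htu : t + (v - x') ≤ max t 1 * (1 + (v - x')) := by
    have h1' : t ≤ max t 1 := le_max_left _ _
    have h2 : 1 ≤ max t 1 := le_max_right _ _
    nlinarith
  have step1 : (t + (v - x')) ^ 2 ≤ (t + (v - x')) * (max t 1 * ((K + 2) / min r 1 * A)) := by
    have h3 : t + (v - x') ≤ max t 1 * ((K + 2) / min r 1 * A) :=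
      le_trans htu (mul_le_mul_of_nonneg_left hA (by positivity))
    nlinarith [h3, ht, hu]
  calc 1 + v ^ 2 ≤ C₁ * (t + (v - x')) ^ 2 := h1 v hv
    _ ≤ C₁ * ((t + (v - x')) * (max t 1 * ((K + 2) / min r 1 * A))) :=
        mul_le_mul_of_nonneg_left step1 (le_of_lt hC₁)
    _ = C₁ * max t 1 * ((K + 2) / min r 1) * ((t + (v - x')) * A) := by ring

private lemma aux_rep (x' t : ℝ) (ξ : ℂ) (him : ξ.im = 0) :
    (x' : ℂ) - t - ξ = ((x' - t - ξ.re : ℝ) : ℂ) := by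
  apply Complex.ext <;> simp [him]

private lemma aux_norm_eq (ξ : ℂ) (him : ξ.im = 0) : ‖ξ‖ = |ξ.re| := by
  have h : ξ = (ξ.re : ℂ) := Complex.ext (by simp) (by simp [him])
  rw [h, Complex.norm_real, Real.norm_eq_abs, Complex.ofReal_re]

/-- The support of a measure. -/
def msupp (μ : Measure ℂ) : Set ℂ := {z : ℂ | ∀ r : ℝ, 0 < r → 0 < μ (ball z r)}

theorem not_constant_on_ray (μ : Measure ℂ) (hμ : μ ≠ 0) (x' : ℝ)
    (hsupp : msupp μ ⊆ {ζ : ℂ | ζ.im = 0 ∧ x' ≤ ζ.re})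
    (hnull : μ ({ζ : ℂ | ζ.im = 0 ∧ x' ≤ ζ.re}ᶜ) = 0)
    (hx' : (x' : ℂ) ∈ msupp μ)
    (hint : ∫⁻ ξ, ENNReal.ofReal (1 / (1 + ‖ξ‖ ^ 2)) ∂μ < ⊤)
    (z₀ : ℂ) (hz₀ : z₀ ∉ msupp μ)
    (F : ℝ → ℂ)
    (hF : ∀ t : ℝ, F t = ∫ ξ, ((((x' : ℂ) - t) - ξ)⁻¹ - (z₀ - ξ)⁻¹) ∂μ) :
    (∀ t : ℝ, 0 < t →
      HasDerivAt F (∫ ξ, ((((x' : ℂ) - t) - ξ)⁻¹) ^ 2 ∂μ) t ∧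
      0 < (∫ ξ, ((((x' : ℂ) - t) - ξ)⁻¹) ^ 2 ∂μ).re ∧
      (∫ ξ, ((((x' : ℂ) - t) - ξ)⁻¹) ^ 2 ∂μ).im = 0) ∧
    ¬ (∀ s t : ℝ, 0 < s → 0 < t → F s = F t) := by
  classical
  obtain ⟨r, hr, hball⟩ : ∃ r : ℝ, 0 < r ∧ μ (ball z₀ r) = 0 := by
    by_contra h
    push_neg at h
    exact hz₀ fun s hs => pos_iff_ne_zero.mpr (h s hs)
  have haeS : ∀ᵐ ξ ∂μ, (ξ.im = 0 ∧ x' ≤ ξ.re) ∧ r ≤ dist ξ z₀ := by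
    have h1 : ∀ᵐ ξ ∂μ, ξ.im = 0 ∧ x' ≤ ξ.re := by
      rw [ae_iff]; exact hnull
    have h2 : ∀ᵐ ξ ∂μ, r ≤ dist ξ z₀ := by
      rw [ae_iff]
      refine measure_mono_null (fun ξ hξ => ?_) hball
      simp only [Set.mem_setOf_eq, not_le] at hξ
      exact mem_ball.mpr hξ
    exact h1.and h2
  have hbase : Integrable (fun ξ : ℂ => 1 / (1 + ‖ξ‖ ^ 2)) μ := by
    constructor
    · exact Continuous.aestronglyMeasurable
        (continuous_const.div (by continuity) (fun ξ => by positivity))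
    · refine lt_of_le_of_lt (le_of_eq ?_) hint
      refine lintegral_congr fun ξ => ?_
      exact Real.enorm_eq_ofReal (by positivity)
  have hmeasF : ∀ s : ℝ, AEStronglyMeasurable
      (fun ξ : ℂ => ((x' : ℂ) - s - ξ)⁻¹ - (z₀ - ξ)⁻¹) μ :=
    fun s => (((measurable_const.sub measurable_id).inv).sub
      ((measurable_const.sub measurable_id).inv)).aestronglyMeasurable
  have hmeasF' : ∀ s : ℝ, AEStronglyMeasurable
      (fun ξ : ℂ => (((x' : ℂ) - s - ξ)⁻¹) ^ 2) μ :=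
    fun s => (((measurable_const.sub measurable_id).inv).pow_const 2).aestronglyMeasurable
  have key : ∀ t : ℝ, 0 < t →
      HasDerivAt F (∫ ξ, ((((x' : ℂ) - t) - ξ)⁻¹) ^ 2 ∂μ) t ∧
      0 < (∫ ξ, ((((x' : ℂ) - t) - ξ)⁻¹) ^ 2 ∂μ).re ∧
      (∫ ξ, ((((x' : ℂ) - t) - ξ)⁻¹) ^ 2 ∂μ).im = 0 := by
    intro t ht
    obtain ⟨C₁, hC₁, hB1⟩ := aux_bound1 (t / 2) x' (by positivity)
    obtain ⟨C₂, hC₂, hB2⟩ := aux_bound2 t x' r ‖z₀‖ ht hr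
    have hpt1 : ∀ s : ℝ, t / 2 ≤ s → ∀ ξ : ℂ, ξ.im = 0 → x' ≤ ξ.re →
        ‖(((x' : ℂ) - s - ξ)⁻¹) ^ 2‖ ≤ C₁ * (1 / (1 + ‖ξ‖ ^ 2)) := by
      intro s hs ξ him hxv
      have hts : 0 < s := by linarith
      have e2 : ‖(((x' : ℂ) - s - ξ)⁻¹) ^ 2‖ = (|x' - s - ξ.re|⁻¹) ^ 2 := by
        rw [aux_rep x' s ξ him, norm_pow, norm_inv, Complex.norm_real, Real.norm_eq_abs]
      have habs : |x' - s - ξ.re| = s + (ξ.re - x') := by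
        rw [abs_of_nonpos (by linarith)]; ring
      have hξ2 : ‖ξ‖ ^ 2 = ξ.re ^ 2 := by rw [aux_norm_eq ξ him, sq_abs]
      rw [e2, habs, hξ2]
      have hu : 0 ≤ ξ.re - x' := by linarith
      have hpos1 : 0 < s + (ξ.re - x') := by linarith
      rw [show (s + (ξ.re - x'))⁻¹ ^ 2 = 1 / (s + (ξ.re - x')) ^ 2 by
        rw [one_div, inv_pow], mul_one_div, div_le_div_iff₀ (by positivity) (by positivity)]
      have hsq : (t / 2 + (ξ.re - x')) ^ 2 ≤ (s + (ξ.re - x')) ^ 2 := by nlinarith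
      calc 1 * (1 + ξ.re ^ 2) = 1 + ξ.re ^ 2 := one_mul _
        _ ≤ C₁ * (t / 2 + (ξ.re - x')) ^ 2 := hB1 ξ.re hxv
        _ ≤ C₁ * (s + (ξ.re - x')) ^ 2 := mul_le_mul_of_nonneg_left hsq (le_of_lt hC₁)
    have hpt2 : ∀ ξ : ℂ, ξ.im = 0 → x' ≤ ξ.re → r ≤ dist ξ z₀ →
        ‖((x' : ℂ) - t - ξ)⁻¹ - (z₀ - ξ)⁻¹‖ ≤
          (‖z₀ - ((x' : ℂ) - t)‖ * C₂) * (1 / (1 + ‖ξ‖ ^ 2)) := by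
      intro ξ him hxv hdist
      have hc_ne : (x' : ℂ) - t - ξ ≠ 0 := by
        rw [aux_rep x' t ξ him]
        exact Complex.ofReal_ne_zero.mpr (by intro h; linarith)
      have hzr : r ≤ ‖z₀ - ξ‖ := by
        rw [norm_sub_rev, ← dist_eq_norm]; exact hdist
      have hz_ne : z₀ - ξ ≠ 0 := by
        intro h0; rw [h0, norm_zero] at hzr; linarith
      rw [inv_sub_inv hc_ne hz_ne,
        show z₀ - ξ - ((x' : ℂ) - t - ξ) = z₀ - ((x' : ℂ) - t) by ring,
        norm_div, norm_mul]
      have hnc : ‖(x' : ℂ) - t - ξ‖ = t + (ξ.re - x') := by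
        rw [aux_rep x' t ξ him, Complex.norm_real, Real.norm_eq_abs,
          abs_of_nonpos (by linarith)]; ring
      have hNA : |ξ.re| - ‖z₀‖ ≤ ‖z₀ - ξ‖ := by
        rw [norm_sub_rev]
        calc |ξ.re| - ‖z₀‖ = ‖ξ‖ - ‖z₀‖ := by rw [aux_norm_eq ξ him]
          _ ≤ ‖ξ - z₀‖ := norm_sub_norm_le _ _
      have hB := hB2 ξ.re ‖z₀ - ξ‖ hxv hzr hNA
      have hξ2 : ‖ξ‖ ^ 2 = ξ.re ^ 2 := by rw [aux_norm_eq ξ him, sq_abs]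
      rw [hnc, hξ2]
      have hA0 : 0 < ‖z₀ - ξ‖ := lt_of_lt_of_le hr hzr
      have hden : 0 < (t + (ξ.re - x')) * ‖z₀ - ξ‖ :=
        mul_pos (by linarith) hA0
      rw [mul_one_div, div_le_div_iff₀ hden (by positivity)]
      have hnn : (0:ℝ) ≤ ‖z₀ - ((x' : ℂ) - t)‖ := norm_nonneg _
      nlinarith [mul_le_mul_of_nonneg_left hB hnn]
    have hIntF' : Integrable (fun ξ : ℂ => (((x' : ℂ) - t - ξ)⁻¹) ^ 2) μ := by
      refine (hbase.const_mul C₁).mono' (hmeasF' t) ?_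
      filter_upwards [haeS] with ξ hξ
      exact hpt1 t (by linarith) ξ hξ.1.1 hξ.1.2
    have hIntF : Integrable (fun ξ : ℂ => ((x' : ℂ) - t - ξ)⁻¹ - (z₀ - ξ)⁻¹) μ := by
      refine (hbase.const_mul (‖z₀ - ((x' : ℂ) - t)‖ * C₂)).mono' (hmeasF t) ?_
      filter_upwards [haeS] with ξ hξ
      exact hpt2 ξ hξ.1.1 hξ.1.2 hξ.2
    have h_bound : ∀ᵐ ξ ∂μ, ∀ s ∈ ball t (t / 2),
        ‖(((x' : ℂ) - s - ξ)⁻¹) ^ 2‖ ≤ C₁ * (1 / (1 + ‖ξ‖ ^ 2)) := by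
      filter_upwards [haeS] with ξ hξ s hs
      have hst : t / 2 ≤ s := by
        rw [mem_ball, Real.dist_eq] at hs
        have := abs_lt.mp hs
        linarith [this.1]
      exact hpt1 s hst ξ hξ.1.1 hξ.1.2
    have h_diff : ∀ᵐ ξ ∂μ, ∀ s ∈ ball t (t / 2),
        HasDerivAt (fun s : ℝ => ((x' : ℂ) - s - ξ)⁻¹ - (z₀ - ξ)⁻¹)
          ((((x' : ℂ) - s - ξ)⁻¹) ^ 2) s := by
      filter_upwards [haeS] with ξ hξ s hs
      have hxv := hξ.1.2
      have hst : t / 2 < s := by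
        rw [mem_ball, Real.dist_eq] at hs
        have := abs_lt.mp hs
        linarith [this.1]
      have hne : (x' : ℂ) - s - ξ ≠ 0 := by
        rw [aux_rep x' s ξ hξ.1.1]
        exact Complex.ofReal_ne_zero.mpr (by intro h; linarith)
      have h1 : HasDerivAt (fun s : ℝ => ((s : ℝ) : ℂ)) 1 s := by
        simpa using (hasDerivAt_id s).ofReal_comp
      have h2 : HasDerivAt (fun s : ℝ => (x' : ℂ) - s - ξ) (0 - 1 - 0) s :=
        ((hasDerivAt_const s ((x' : ℂ))).sub h1).sub (hasDerivAt_const s ξ)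
      have hg : HasDerivAt (Inv.inv : ℂ → ℂ) (-(((x' : ℂ) - s - ξ) ^ 2)⁻¹)
          ((x' : ℂ) - s - ξ) := hasDerivAt_inv hne
      have h3 := (hg.hasFDerivAt.restrictScalars ℝ).comp_hasDerivAt s h2
      have h4 : HasDerivAt (fun s : ℝ => ((x' : ℂ) - s - ξ)⁻¹)
          ((((x' : ℂ) - s - ξ)⁻¹) ^ 2) s := by
        convert h3 using 1
        · rfl
        · rfl
        · simp [inv_pow]
      exact h4.sub_const _
    have hder := hasDerivAt_integral_of_dominated_loc_of_deriv_le
      (F' := fun (s : ℝ) (ξ : ℂ) => (((x' : ℂ) - s - ξ)⁻¹) ^ 2)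
      (ball_mem_nhds t (half_pos ht)) (Filter.Eventually.of_forall hmeasF) hIntF (hmeasF' t)
      h_bound (hbase.const_mul C₁) h_diff
    have hderiv : HasDerivAt F (∫ ξ, ((((x' : ℂ) - t) - ξ)⁻¹) ^ 2 ∂μ) t := by
      have hd2 := hder.2
      have hFe : F = fun s : ℝ => ∫ ξ, (((x' : ℂ) - s - ξ)⁻¹ - (z₀ - ξ)⁻¹) ∂μ := funext hF
      rw [hFe]
      exact hd2
    set g : ℂ → ℝ := fun ξ => ((x' - t - ξ.re)⁻¹) ^ 2 with hg_def
    have heq : (∫ ξ, ((((x' : ℂ) - t) - ξ)⁻¹) ^ 2 ∂μ) = ((∫ ξ, g ξ ∂μ : ℝ) : ℂ) := by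
      have hcast : ((∫ ξ, g ξ ∂μ : ℝ) : ℂ) = ∫ ξ, ((g ξ : ℝ) : ℂ) ∂μ := integral_ofReal.symm
      rw [hcast]
      refine integral_congr_ae ?_
      filter_upwards [haeS] with ξ hξ
      rw [aux_rep x' t ξ hξ.1.1]
      norm_cast
    have hgmeas : AEStronglyMeasurable g μ :=
      (((measurable_const.sub Complex.measurable_re).inv).pow_const 2).aestronglyMeasurable
    have hgint : Integrable g μ := by
      refine (hbase.const_mul C₁).mono' hgmeas ?_
      filter_upwards [haeS] with ξ hξ
      have h := hpt1 t (by linarith) ξ hξ.1.1 hξ.1.2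
      have e : ‖g ξ‖ = ‖(((x' : ℂ) - t - ξ)⁻¹) ^ 2‖ := by
        rw [aux_rep x' t ξ hξ.1.1, ← Complex.ofReal_inv, ← Complex.ofReal_pow,
          Complex.norm_real, Real.norm_eq_abs]
      rw [e]
      exact h
    have hpos : 0 < ∫ ξ, g ξ ∂μ := by
      rw [integral_pos_iff_support_of_nonneg (fun ξ => sq_nonneg _) hgint]
      have hSsub : {ζ : ℂ | ζ.im = 0 ∧ x' ≤ ζ.re} ⊆ Function.support g := by
        intro ζ hζ
        have hne : x' - t - ζ.re ≠ 0 := by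
          have := hζ.2
          intro h; linarith
        exact pow_ne_zero 2 (inv_ne_zero hne)
      calc (0 : ENNReal) < μ Set.univ := Measure.measure_univ_pos.mpr hμ
        _ = μ ({ζ : ℂ | ζ.im = 0 ∧ x' ≤ ζ.re} ∪ {ζ : ℂ | ζ.im = 0 ∧ x' ≤ ζ.re}ᶜ) := by
            rw [Set.union_compl_self]
        _ ≤ μ {ζ : ℂ | ζ.im = 0 ∧ x' ≤ ζ.re} + μ ({ζ : ℂ | ζ.im = 0 ∧ x' ≤ ζ.re}ᶜ) :=
            measure_union_le _ _
        _ = μ {ζ : ℂ | ζ.im = 0 ∧ x' ≤ ζ.re} := by rw [hnull, add_zero]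
        _ ≤ μ (Function.support g) := measure_mono hSsub
    refine ⟨hderiv, ?_, ?_⟩
    · rw [heq]; simpa using hpos
    · rw [heq]; simp
  refine ⟨key, fun hcon => ?_⟩
  obtain ⟨hd, hp, _⟩ := key 1 one_pos
  have heF : F =ᶠ[nhds (1 : ℝ)] fun _ => F 1 := by
    filter_upwards [isOpen_Ioi.mem_nhds (show (0 : ℝ) < 1 by norm_num)] with s hs
    exact hcon s 1 hs one_pos
  have h0 : HasDerivAt F 0 1 := (hasDerivAt_const (1 : ℝ) (F 1)).congr_of_eventuallyEq heF
  have hzero := hd.unique h0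
  rw [hzero] at hp
  simp at hp
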